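/- Let k ≥ 2 be an integer, ζ a real number, and T > 1 a fixed real number. Then there exists a threshold x̂ = x̂(T, ζ, k) such that for every integer x ≥ x̂ satisfying max_{1≤j≤k} ‖ζ^j x‖ ≤ x^{−T}, there exist positive integers x_0, M_0 and an integer y_0 with gcd(x_0, y_0) = 1, x = M_0·x_0, |ζx_0 − y_0| = ‖ζx_0‖ = min_{1≤v≤x} ‖ζv‖, and moreover x ≥ x_0^k, M_0 ≥ x_0^{k−1}, and |ζx_0 − y_0| ≤ x_0^{−kT−k+1}. -/

import Mathlib

/-- Distance from a real number to the nearest integer. -/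
noncomputable def distNearestInt (a : ℝ) : ℝ := |a - round a|

/-- `max_{1 ≤ j ≤ k} ‖ζ^j x‖` for a positive integer `x`. -/
noncomputable def maxDist (k : ℕ) (ζ : ℝ) (x : ℕ) : ℝ :=
  ⨆ j ∈ Finset.Icc 1 k, distNearestInt (ζ ^ j * x)

/-- The approximation constant `λ_k(ζ)`, as an extended real number in `[0,∞]`. -/
noncomputable def lambdaConst (k : ℕ) (ζ : ℝ) : EReal :=
  sSup (insert (0 : EReal) {e : EReal | ∃ η : ℝ, e = (η : EReal) ∧
    {x : ℕ | 0 < x ∧ 0 < maxDist k ζ x ∧ maxDist k ζ x ≤ (x : ℝ) ^ (-η)}.Infinite})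

/-- The uniform approximation constant `λ̂_k(ζ)`, as an extended real number in `[0,∞]`. -/
noncomputable def lambdaHatConst (k : ℕ) (ζ : ℝ) : EReal :=
  sSup (insert (0 : EReal) {e : EReal | ∃ η : ℝ, e = (η : EReal) ∧
    ∃ X₀ : ℝ, ∀ X : ℝ, X₀ ≤ X → ∃ x : ℕ, 1 ≤ x ∧ (x : ℝ) ≤ X ∧
      0 < maxDist k ζ x ∧ maxDist k ζ x ≤ X ^ (-η)})

/-- The dual approximation constant `w_k(ζ)`, as an extended real number in `[0,∞]`. -/
noncomputable def wConst (k : ℕ) (ζ : ℝ) : EReal :=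
  sSup (insert (0 : EReal) {e : EReal | ∃ ν : ℝ, e = (ν : EReal) ∧
    ∀ X₀ : ℝ, ∃ X : ℝ, X₀ ≤ X ∧ ∃ p : Fin (k + 1) → ℤ,
      (∀ j, |(p j : ℝ)| ≤ X) ∧
      0 < |∑ j : Fin (k + 1), ζ ^ (j : ℕ) * (p j : ℝ)| ∧
      |∑ j : Fin (k + 1), ζ ^ (j : ℕ) * (p j : ℝ)| ≤ X ^ (-ν)})

/-- The uniform dual approximation constant `ŵ_k(ζ)`, as an extended real number in `[0,∞]`. -/
noncomputable def wHatConst (k : ℕ) (ζ : ℝ) : EReal :=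
  sSup (insert (0 : EReal) {e : EReal | ∃ ν : ℝ, e = (ν : EReal) ∧
    ∃ X₀ : ℝ, ∀ X : ℝ, X₀ ≤ X → ∃ p : Fin (k + 1) → ℤ,
      (∀ j, |(p j : ℝ)| ≤ X) ∧
      0 < |∑ j : Fin (k + 1), ζ ^ (j : ℕ) * (p j : ℝ)| ∧
      |∑ j : Fin (k + 1), ζ ^ (j : ℕ) * (p j : ℝ)| ≤ X ^ (-ν)})

lemma dNI_nonneg (a : ℝ) : 0 ≤ distNearestInt a := abs_nonneg _

lemma dNI_half (a : ℝ) : distNearestInt a ≤ 1 / 2 := abs_sub_round a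

lemma dNI_le (a : ℝ) (m : ℤ) : distNearestInt a ≤ |a - m| := round_le a m

lemma dNI_triangle (u v : ℝ) : distNearestInt u ≤ |u - v| + distNearestInt v :=
  (dNI_le u (round v)).trans (abs_sub_le u v (round v))

lemma dvd_of_dNI_lt (a : ℤ) (b : ℕ) (hb : 0 < b)
    (h : distNearestInt ((a : ℝ) / b) < 1 / b) : (b : ℤ) ∣ a := by
  have hbR : (0 : ℝ) < b := by exact_mod_cast hb
  set n : ℤ := round ((a : ℝ) / b) with hn
  have h1 : |(a : ℝ) / b - n| < 1 / b := h
  have h2 : |(a : ℝ) - n * b| < 1 := by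
    have heq : |(a : ℝ) - n * b| = |(a : ℝ) / b - n| * b := by
      rw [← abs_of_pos hbR, ← abs_mul]
      congr 1
      field_simp
      rw [abs_of_pos hbR]; ring
    rw [heq]
    calc |(a : ℝ) / b - n| * b < (1 / b) * b := mul_lt_mul_of_pos_right h1 hbR
      _ = 1 := by field_simp
  have h4 : |((a - n * b : ℤ) : ℝ)| < 1 := by push_cast; exact h2
  have h5 : |a - n * b| < 1 := by exact_mod_cast h4
  have h6 := abs_lt.mp h5
  exact ⟨n, by linarith [h6.1, h6.2]⟩

lemma pow_sub_pow_abs_le (a b C : ℝ) (ha : |a| ≤ C) (hb : |b| ≤ C) (n : ℕ) :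
    |a ^ (n + 1) - b ^ (n + 1)| ≤ ((n : ℝ) + 1) * C ^ n * |a - b| := by
  have hC : 0 ≤ C := (abs_nonneg a).trans ha
  induction n with
  | zero => simp
  | succ n ih =>
    have key : a ^ (n + 1 + 1) - b ^ (n + 1 + 1)
        = a ^ (n + 1) * (a - b) + b * (a ^ (n + 1) - b ^ (n + 1)) := by ring
    have h1 : |a ^ (n + 1)| ≤ C ^ (n + 1) := by
      rw [abs_pow]; exact pow_le_pow_left₀ (abs_nonneg a) ha _
    calc |a ^ (n + 1 + 1) - b ^ (n + 1 + 1)|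
        ≤ |a ^ (n + 1)| * |a - b| + |b| * |a ^ (n + 1) - b ^ (n + 1)| := by
          rw [key]
          refine (abs_add_le _ _).trans ?_
          rw [abs_mul, abs_mul]
      _ ≤ C ^ (n + 1) * |a - b| + C * (((n : ℝ) + 1) * C ^ n * |a - b|) :=
          add_le_add (mul_le_mul_of_nonneg_right h1 (abs_nonneg _))
            (mul_le_mul hb ih (abs_nonneg _) hC)
      _ = (((n + 1 : ℕ) : ℝ) + 1) * C ^ (n + 1) * |a - b| := by push_cast; ring

lemma le_maxDist (k : ℕ) (ζ : ℝ) (x : ℕ) {j : ℕ} (hj : j ∈ Finset.Icc 1 k) :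
    distNearestInt (ζ ^ j * x) ≤ maxDist k ζ x := by
  have hb : BddAbove (Set.range fun j : ℕ =>
      ⨆ _ : j ∈ Finset.Icc 1 k, distNearestInt (ζ ^ j * x)) := by
    refine ⟨1 / 2, ?_⟩
    rintro r ⟨i, rfl⟩
    exact Real.iSup_le (fun _ => dNI_half _) (by norm_num)
  have h := le_ciSup hb j
  rw [ciSup_pos hj] at h
  exact h

set_option maxHeartbeats 1000000 in
theorem stmt10 (k : ℕ) (hk : 2 ≤ k) (ζ : ℝ) (T : ℝ) (hT : 1 < T) :
    ∃ xhat : ℕ, ∀ x : ℕ, xhat ≤ x → maxDist k ζ x ≤ (x : ℝ) ^ (-T) →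
      ∃ (x₀ M₀ : ℕ) (y₀ : ℤ), 0 < x₀ ∧ 0 < M₀ ∧ Int.gcd (x₀ : ℤ) y₀ = 1 ∧
        x = M₀ * x₀ ∧
        |ζ * x₀ - y₀| = distNearestInt (ζ * x₀) ∧
        IsLeast ((fun v : ℕ => distNearestInt (ζ * v)) '' Set.Icc 1 x)
          (distNearestInt (ζ * x₀)) ∧
        x₀ ^ k ≤ x ∧ x₀ ^ (k - 1) ≤ M₀ ∧
        |ζ * x₀ - y₀| ≤ (x₀ : ℝ) ^ (-(k : ℝ) * T - k + 1) := by
  classical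
  have hk1 : 1 ≤ k := le_trans one_le_two hk
  set C₀ : ℝ := |ζ| + 1 with hC₀def
  have hC₀1 : (1 : ℝ) ≤ C₀ := by have := abs_nonneg ζ; simp only [hC₀def]; linarith
  have hC₀pow : (1 : ℝ) ≤ C₀ ^ k := one_le_pow₀ hC₀1
  set c : ℝ := 1 + ((k : ℝ) + 1) * C₀ ^ k with hcdef
  have hkR : (2 : ℝ) ≤ (k : ℝ) := by exact_mod_cast hk
  have hc4 : (4 : ℝ) ≤ c := by nlinarith
  have hc0 : (0 : ℝ) < c := by linarith
  have hT1 : 0 < T - 1 := by linarith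
  set B : ℝ := max 2 (c ^ (T - 1)⁻¹ + 1) with hBdef
  refine ⟨⌈B⌉₊, fun x hx hmax => ?_⟩
  have hxB : B ≤ (x : ℝ) := le_trans (Nat.le_ceil B) (by exact_mod_cast hx)
  have hx2R : (2 : ℝ) ≤ (x : ℝ) := le_trans (le_max_left _ _) hxB
  have hx0R : (0 : ℝ) < x := by linarith
  have hx1R : (1 : ℝ) ≤ (x : ℝ) := by linarith
  have hx1 : 1 ≤ x := by exact_mod_cast hx1R
  have hxT : c < (x : ℝ) ^ (T - 1) := by
    have h1 : c ^ (T - 1)⁻¹ < (x : ℝ) :=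
      lt_of_lt_of_le (lt_add_one _) (le_trans (le_max_right _ _) hxB)
    have h2 := Real.rpow_lt_rpow (Real.rpow_nonneg hc0.le _) h1 hT1
    rwa [← Real.rpow_mul hc0.le, inv_mul_cancel₀ hT1.ne', Real.rpow_one] at h2
  set D : ℝ := (x : ℝ) ^ (-T) with hDdef
  have hD0 : 0 ≤ D := Real.rpow_nonneg hx0R.le _
  set E : ℝ := D * x with hEdef
  have hE0 : 0 ≤ E := mul_nonneg hD0 hx0R.le
  have hEeq : E = (x : ℝ) ^ (1 - T) := by
    have h : (x : ℝ) ^ (1 - T) = (x : ℝ) ^ (-T) * (x : ℝ) ^ (1 : ℝ) := by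
      rw [← Real.rpow_add hx0R]; congr 1; ring
    rw [hEdef, hDdef, h, Real.rpow_one]
  have hcE : c * E < 1 := by
    have hpos : 0 < (x : ℝ) ^ (T - 1) := Real.rpow_pos_of_pos hx0R _
    have hEinv : E = ((x : ℝ) ^ (T - 1))⁻¹ := by
      rw [hEeq, show (1 : ℝ) - T = -(T - 1) by ring, Real.rpow_neg hx0R.le]
    rw [hEinv]
    calc c * ((x : ℝ) ^ (T - 1))⁻¹ < (x : ℝ) ^ (T - 1) * ((x : ℝ) ^ (T - 1))⁻¹ :=
          mul_lt_mul_of_pos_right hxT (inv_pos.mpr hpos)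
      _ = 1 := mul_inv_cancel₀ hpos.ne'
  have h2E : 2 * E ≤ c * E := mul_le_mul_of_nonneg_right (by linarith) hE0
  have hE1 : E < 1 / 2 := by linarith
  have hDE : D ≤ E := by
    calc D = D * 1 := (mul_one D).symm
      _ ≤ D * x := by gcongr
  have hD1 : D ≤ 1 := by linarith
  have hjb : ∀ j, 1 ≤ j → j ≤ k → distNearestInt (ζ ^ j * x) ≤ D := fun j h1 h2 =>
    le_trans (le_maxDist k ζ x (Finset.mem_Icc.mpr ⟨h1, h2⟩)) hmax
  have hmain : distNearestInt (ζ * x) ≤ D := by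
    have := hjb 1 le_rfl hk1; rwa [pow_one] at this
  -- choose the minimizer x₀
  have hex : ∃ v : ℕ, 1 ≤ v ∧ v ≤ x ∧ ∀ w : ℕ, 1 ≤ w → w ≤ x →
      distNearestInt (ζ * v) ≤ distNearestInt (ζ * w) := by
    obtain ⟨b, hb, hmin⟩ := Finset.exists_min_image (Finset.Icc 1 x)
      (fun v : ℕ => distNearestInt (ζ * v)) ⟨1, Finset.mem_Icc.mpr ⟨le_rfl, hx1⟩⟩
    rw [Finset.mem_Icc] at hb
    exact ⟨b, hb.1, hb.2, fun w h1 h2 => hmin w (Finset.mem_Icc.mpr ⟨h1, h2⟩)⟩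
  obtain ⟨x₀, hPx₀, hleast⟩ : ∃ v : ℕ, (1 ≤ v ∧ v ≤ x ∧ ∀ w : ℕ, 1 ≤ w → w ≤ x →
      distNearestInt (ζ * v) ≤ distNearestInt (ζ * w)) ∧
      ∀ u, u < v → ¬(1 ≤ u ∧ u ≤ x ∧ ∀ w : ℕ, 1 ≤ w → w ≤ x →
        distNearestInt (ζ * u) ≤ distNearestInt (ζ * w)) :=
    ⟨Nat.find hex, Nat.find_spec hex, fun u hu => Nat.find_min hex hu⟩
  obtain ⟨hx₀1, hx₀x, hx₀min⟩ := hPx₀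
  set y₀ : ℤ := round (ζ * (x₀ : ℝ)) with hy₀def
  set ε : ℝ := ζ * x₀ - y₀ with hεdef
  have hdist₀ : distNearestInt (ζ * x₀) = |ε| := rfl
  have hx₀0R : (0 : ℝ) < x₀ := by exact_mod_cast hx₀1
  have hx₀R1 : (1 : ℝ) ≤ x₀ := by exact_mod_cast hx₀1
  have hx₀ne : (x₀ : ℝ) ≠ 0 := hx₀0R.ne'
  have hx₀leR : (x₀ : ℝ) ≤ x := by exact_mod_cast hx₀x
  have hε_le : |ε| ≤ D := by
    rw [← hdist₀]; exact le_trans (hx₀min x hx1 le_rfl) hmain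
  -- gcd(x₀, y₀) = 1
  have hgcd : Int.gcd (x₀ : ℤ) y₀ = 1 := by
    by_contra hne
    have hd0 : Int.gcd (x₀ : ℤ) y₀ ≠ 0 := by
      intro h0
      rw [Int.gcd_eq_zero_iff] at h0
      have : (x₀ : ℤ) ≠ 0 := by exact_mod_cast Nat.pos_iff_ne_zero.mp hx₀1
      exact this h0.1
    set d : ℕ := Int.gcd (x₀ : ℤ) y₀ with hddef
    have hd2 : 2 ≤ d := by omega
    obtain ⟨u, hu⟩ : d ∣ x₀ := by
      have h : ((d : ℕ) : ℤ) ∣ (x₀ : ℤ) := Int.gcd_dvd_left _ _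
      exact_mod_cast h
    obtain ⟨w, hw⟩ : (d : ℤ) ∣ y₀ := Int.gcd_dvd_right _ _
    have hu1 : 1 ≤ u := by
      rcases Nat.eq_zero_or_pos u with h | h
      · rw [h, Nat.mul_zero] at hu; omega
      · exact h
    have hux : u < x₀ := by nlinarith
    have hd0R : (0 : ℝ) < d := by exact_mod_cast lt_of_lt_of_le two_pos hd2
    have hkey : ζ * u - w = ε / d := by
      have hx₀cast : (x₀ : ℝ) = d * u := by exact_mod_cast hu
      have hy₀cast : (y₀ : ℝ) = d * w := by exact_mod_cast hw
      rw [hεdef, hx₀cast, hy₀cast]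
      field_simp
    have h1 : distNearestInt (ζ * u) ≤ |ε| / d := by
      calc distNearestInt (ζ * u) ≤ |ζ * u - w| := dNI_le _ _
        _ = |ε| / d := by rw [hkey, abs_div, abs_of_pos hd0R]
    have h2 : |ε| ≤ distNearestInt (ζ * u) := by
      rw [← hdist₀]; exact hx₀min u hu1 (le_trans hux.le hx₀x)
    have hεd : |ε| / d ≤ |ε| / 2 :=
      div_le_div_of_nonneg_left (abs_nonneg ε) two_pos (by exact_mod_cast hd2)
    have hε0 : |ε| = 0 := le_antisymm (by linarith) (abs_nonneg ε)
    have hu0 : distNearestInt (ζ * u) = 0 := by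
      refine le_antisymm ?_ (dNI_nonneg _)
      rw [hε0] at h1; simpa using h1
    exact hleast u hux
      ⟨hu1, le_trans hux.le hx₀x, fun w' _ _ => by rw [hu0]; exact dNI_nonneg _⟩
  have hcop : IsCoprime (x₀ : ℤ) y₀ := Int.isCoprime_iff_gcd_eq_one.mpr hgcd
  -- x₀ divides x
  have hbase : x₀ ∣ x := by
    have heq : ((y₀ * (x : ℤ) : ℤ) : ℝ) / x₀ - ζ * x = -(ε / x₀ * x) := by
      rw [hεdef]; push_cast; field_simp; ring
    have habs : |ε / x₀ * x| = |ε| / x₀ * x := by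
      rw [abs_mul, abs_div, abs_of_pos hx₀0R, abs_of_pos hx0R]
    have hlt : distNearestInt (((y₀ * (x : ℤ) : ℤ) : ℝ) / x₀) < 1 / x₀ := by
      have hsum : D * x + D * x₀ < 1 := by
        have : D * x₀ ≤ D * x := by gcongr
        have hEx : D * x = E := rfl
        linarith
      calc distNearestInt (((y₀ * (x : ℤ) : ℤ) : ℝ) / x₀)
          ≤ |((y₀ * (x : ℤ) : ℤ) : ℝ) / x₀ - ζ * x| + distNearestInt (ζ * x) :=
            dNI_triangle _ _
        _ ≤ |ε| / x₀ * x + D := by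
            rw [heq, abs_neg, habs]; gcongr
        _ ≤ D / x₀ * x + D := by gcongr
        _ < 1 / x₀ := by
            rw [div_mul_eq_mul_div, div_add' _ _ _ hx₀ne, div_lt_div_iff₀ hx₀0R hx₀0R]
            exact mul_lt_mul_of_pos_right hsum hx₀0R
    have hdvd : (x₀ : ℤ) ∣ y₀ * (x : ℤ) := dvd_of_dNI_lt _ _ (by omega) hlt
    have := hcop.dvd_of_dvd_mul_left hdvd
    exact_mod_cast this
  set M₀ : ℕ := x / x₀ with hM₀def
  have hxM : x = M₀ * x₀ := (Nat.div_mul_cancel hbase).symm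
  have hM₀0 : 0 < M₀ := by
    rcases Nat.eq_zero_or_pos M₀ with h | h
    · rw [h, Nat.zero_mul] at hxM; omega
    · exact h
  have hMcast : (x : ℝ) = M₀ * x₀ := by exact_mod_cast hxM
  have hM₀leR : (M₀ : ℝ) ≤ x := by
    rw [hMcast]
    calc (M₀ : ℝ) = M₀ * 1 := (mul_one _).symm
      _ ≤ M₀ * x₀ := by gcongr
  -- refined bound |ε| * M₀ ≤ D
  have hεM : |ε| * M₀ ≤ D := by
    set n : ℤ := round (ζ * (x : ℝ)) - y₀ * M₀ with hndef
    have hsplit : ζ * x - round (ζ * (x : ℝ)) = ε * M₀ - n := by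
      rw [hndef, hεdef]; push_cast; rw [hMcast]; ring
    have h1 : |ε * M₀ - (n : ℝ)| ≤ D := by
      rw [← hsplit]; exact hmain
    have h2 : |ε * (M₀ : ℝ)| ≤ E := by
      rw [abs_mul, abs_of_nonneg (by positivity : (0:ℝ) ≤ (M₀:ℝ))]
      calc |ε| * M₀ ≤ D * x := by gcongr
        _ = E := rfl
    have hn0 : n = 0 := by
      have hr : |(n : ℝ)| < 1 := by
        have hn' : (n : ℝ) = ε * M₀ - (ε * M₀ - n) := by ring
        calc |(n : ℝ)| = |ε * M₀ - (ε * M₀ - (n : ℝ))| := by rw [← hn']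
          _ ≤ |ε * (M₀ : ℝ)| + |ε * M₀ - (n : ℝ)| := abs_sub _ _
          _ ≤ E + D := add_le_add h2 h1
          _ < 1 := by linarith
      have h6 : |n| < 1 := by exact_mod_cast hr
      have h7 := abs_lt.mp h6
      omega
    rw [hn0] at h1
    rw [Int.cast_zero, sub_zero, abs_mul, abs_of_nonneg (by positivity : (0:ℝ) ≤ (M₀:ℝ))] at h1
    exact h1
  -- the divisibility induction
  have hstep : ∀ j, j ≤ k → x₀ ^ j ∣ x := by
    intro j hj
    induction j with
    | zero => simpa using one_dvd x
    | succ n ih =>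
      have hdvd : x₀ ^ n ∣ x := ih (Nat.le_of_succ_le hj)
      set m : ℕ := x / x₀ ^ n with hmdef
      have hxm : x = m * x₀ ^ n := (Nat.div_mul_cancel hdvd).symm
      have hb_eq : (y₀ : ℝ) / x₀ = ζ - ε / x₀ := by
        rw [hεdef]; field_simp; ring
      have hb_abs : |(y₀ : ℝ) / x₀| ≤ C₀ := by
        rw [hb_eq, hC₀def]
        have h1 : |ε| / (x₀ : ℝ) ≤ 1 := by
          rw [div_le_one hx₀0R]; exact le_trans hε_le (le_trans hD1 hx₀R1)
        calc |ζ - ε / x₀| ≤ |ζ| + |ε / x₀| := abs_sub _ _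
          _ = |ζ| + |ε| / x₀ := by rw [abs_div, abs_of_pos hx₀0R]
          _ ≤ |ζ| + 1 := by linarith
      have hζb : |ζ - (y₀ : ℝ) / x₀| = |ε| / x₀ := by
        rw [hb_eq]
        simp [abs_div, abs_of_pos hx₀0R]
      have hpow : |ζ ^ (n + 1) - ((y₀ : ℝ) / x₀) ^ (n + 1)| ≤
          ((n : ℝ) + 1) * C₀ ^ n * (|ε| / x₀) := by
        have h := pow_sub_pow_abs_le ζ ((y₀ : ℝ) / x₀) C₀
          (by rw [hC₀def]; linarith [abs_nonneg ζ]) hb_abs n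
        rwa [hζb] at h
      have hεx : |ε| / x₀ * x = |ε| * M₀ := by
        rw [hMcast]; field_simp
      have hrateq : ((y₀ ^ (n + 1) * (m : ℤ) : ℤ) : ℝ) / x₀ = ((y₀ : ℝ) / x₀) ^ (n + 1) * x := by
        have hxcast : (x : ℝ) = m * (x₀ : ℝ) ^ n := by exact_mod_cast hxm
        push_cast
        rw [hxcast]
        field_simp
        have h1 : (x₀:ℝ) * (x₀:ℝ)⁻¹ = 1 := mul_inv_cancel₀ hx₀ne
        have h2 : (x₀:ℝ)^n * (x₀:ℝ)⁻¹^n = 1 := by rw [← mul_pow, h1, one_pow]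
        linear_combination (-((y₀:ℝ) * (y₀:ℝ)^n * (m:ℝ)) * ((x₀:ℝ)^n * (x₀:ℝ)⁻¹^n)) * h1 - ((y₀:ℝ) * (y₀:ℝ)^n * (m:ℝ)) * h2
      have hlt : distNearestInt (((y₀ ^ (n + 1) * (m : ℤ) : ℤ) : ℝ) / x₀) < 1 / x₀ := by
        calc distNearestInt (((y₀ ^ (n + 1) * (m : ℤ) : ℤ) : ℝ) / x₀)
            ≤ |((y₀ : ℝ) / x₀) ^ (n + 1) * x - ζ ^ (n + 1) * x|
                + distNearestInt (ζ ^ (n + 1) * x) := by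
              rw [hrateq]; exact dNI_triangle _ _
          _ ≤ ((n : ℝ) + 1) * C₀ ^ n * (|ε| / x₀) * x + D := by
              rw [← sub_mul, abs_mul, abs_of_nonneg hx0R.le]
              gcongr
              · rw [abs_sub_comm]; exact hpow
              · exact hjb (n + 1) (Nat.succ_le_succ (Nat.zero_le n)) hj
          _ = ((n : ℝ) + 1) * C₀ ^ n * (|ε| * M₀) + D := by rw [mul_assoc, hεx, ← mul_assoc]
          _ ≤ ((n : ℝ) + 1) * C₀ ^ n * D + D := by
              gcongr
          _ ≤ ((k : ℝ) + 1) * C₀ ^ k * D + D := by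
              have hnk : n ≤ k := Nat.le_of_succ_le hj
              have hnkR : (n : ℝ) ≤ (k : ℝ) := by exact_mod_cast hnk
              gcongr
          _ = c * D := by rw [hcdef]; ring
          _ < 1 / x₀ := by
              rw [lt_div_iff₀ hx₀0R]
              calc c * D * x₀ ≤ c * D * x := by gcongr
                _ = c * E := by rw [hEdef]; ring
                _ < 1 := hcE
      have hdvd2 : (x₀ : ℤ) ∣ y₀ ^ (n + 1) * m := dvd_of_dNI_lt _ _ (by omega) hlt
      have hdm : (x₀ : ℤ) ∣ (m : ℤ) := (hcop.pow_right).dvd_of_dvd_mul_left hdvd2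
      have hx₀m : x₀ ∣ m := by exact_mod_cast hdm
      obtain ⟨t, ht⟩ := hx₀m
      exact ⟨t, by rw [hxm, ht]; ring⟩
  have hxk : x₀ ^ k ≤ x := Nat.le_of_dvd (by omega) (hstep k le_rfl)
  have hMk : x₀ ^ (k - 1) ≤ M₀ := by
    obtain ⟨t, ht⟩ := hstep k le_rfl
    have ht1 : 1 ≤ t := by
      rcases Nat.eq_zero_or_pos t with h | h
      · rw [h, Nat.mul_zero] at ht; omega
      · exact h
    have hk' : k - 1 + 1 = k := by omega
    have hM₀eq : M₀ = x₀ ^ (k - 1) * t := by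
      have hps : x₀ ^ k = x₀ ^ (k - 1) * x₀ := by rw [← pow_succ, hk']
      have h2 : M₀ * x₀ = (x₀ ^ (k - 1) * t) * x₀ := by
        rw [← hxM, ht, hps]; ring
      exact Nat.eq_of_mul_eq_mul_right (by omega) h2
    rw [hM₀eq]
    calc x₀ ^ (k - 1) = x₀ ^ (k - 1) * 1 := (Nat.mul_one _).symm
      _ ≤ x₀ ^ (k - 1) * t := Nat.mul_le_mul_left _ ht1
  -- final rpow bound
  have hfinal : |ε| ≤ (x₀ : ℝ) ^ (-(k : ℝ) * T - k + 1) := by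
    have hMR : ((x₀ : ℝ)) ^ (k - 1 : ℕ) ≤ (M₀ : ℝ) := by exact_mod_cast hMk
    have hxkR : ((x₀ : ℝ)) ^ (k : ℕ) ≤ (x : ℝ) := by exact_mod_cast hxk
    have hx₀k_pos : (0 : ℝ) < (x₀ : ℝ) ^ (k : ℕ) := by positivity
    have h1 : |ε| * (x₀ : ℝ) ^ (k - 1 : ℕ) ≤ D :=
      le_trans (mul_le_mul_of_nonneg_left hMR (abs_nonneg ε)) hεM
    have h2 : D ≤ ((x₀ : ℝ) ^ (k : ℕ)) ^ (-T) := by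
      rw [hDdef]
      exact Real.rpow_le_rpow_of_nonpos hx₀k_pos hxkR (by linarith)
    have h3 : ((x₀ : ℝ) ^ (k : ℕ)) ^ (-T) = (x₀ : ℝ) ^ ((k : ℝ) * (-T)) := by
      rw [← Real.rpow_natCast (x₀ : ℝ) k, ← Real.rpow_mul hx₀0R.le]
    have h4 : ((x₀ : ℝ)) ^ (k - 1 : ℕ) = (x₀ : ℝ) ^ ((k : ℝ) - 1) := by
      rw [← Real.rpow_natCast (x₀ : ℝ) (k - 1)]
      congr 1
      have : ((k - 1 : ℕ) : ℝ) = (k : ℝ) - 1 := by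
        have := hk1; push_cast [this]; ring
      rw [this]
    have hpow1_pos : (0 : ℝ) < (x₀ : ℝ) ^ ((k : ℝ) - 1) := Real.rpow_pos_of_pos hx₀0R _
    have h5 : |ε| ≤ (x₀ : ℝ) ^ ((k : ℝ) * (-T)) / (x₀ : ℝ) ^ ((k : ℝ) - 1) := by
      rw [le_div_iff₀ hpow1_pos, ← h4]
      exact le_trans h1 (h2.trans_eq h3)
    calc |ε| ≤ (x₀ : ℝ) ^ ((k : ℝ) * (-T)) / (x₀ : ℝ) ^ ((k : ℝ) - 1) := h5
      _ = (x₀ : ℝ) ^ ((k : ℝ) * (-T) - ((k : ℝ) - 1)) := (Real.rpow_sub hx₀0R _ _).symm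
      _ = (x₀ : ℝ) ^ (-(k : ℝ) * T - k + 1) := by congr 1; ring
  refine ⟨x₀, M₀, y₀, hx₀1, hM₀0, hgcd, hxM, hdist₀.symm, ?_, hxk, hMk, hfinal⟩
  constructor
  · exact ⟨x₀, Set.mem_Icc.mpr ⟨hx₀1, hx₀x⟩, rfl⟩
  · rintro r ⟨v, hv, rfl⟩
    rw [Set.mem_Icc] at hv
    exact hx₀min v hv.1 hv.2
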